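/- Define R(α,n,λ) as the error term so that α Σ_{j=0}^n C(αn,αj) λ^{αj} = (1+λ)^{αn} − R(α,n,λ). Then for α ∈ (1,2), n ≥ 1, and λ ∈ (0,1], one has 0 > R(α,n,λ) > 1 − α > −1. -/

import Mathlib

open Real intervalIntegral Set

private lemma key_integral (α k d e : ℝ) (hα : 1 < α) (hk : 0 < k) (he : 0 < e) :
    (∫ t in (0:ℝ)..1, t ^ (α - 1) / ((k * t ^ α - d) ^ 2 + e ^ 2)) =
      (1 / (α * k * e)) * (Real.arctan ((k - d) / e) + Real.arctan (d / e)) := by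
  have hα0 : (0:ℝ) < α := by linarith
  have hderiv : ∀ t ∈ uIcc (0:ℝ) 1,
      HasDerivAt (fun t => (1 / (α * k * e)) * Real.arctan ((k * t ^ α - d) / e))
        (t ^ (α - 1) / ((k * t ^ α - d) ^ 2 + e ^ 2)) t := by
    intro t _
    have h1 : HasDerivAt (fun t : ℝ => t ^ α) (α * t ^ (α - 1)) t :=
      Real.hasDerivAt_rpow_const (Or.inr hα.le)
    have h2 := (((h1.const_mul k).sub_const d).div_const e).arctan
    have h3 := h2.const_mul (1 / (α * k * e))
    refine h3.congr_deriv ?_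
    have hden : (0:ℝ) < (k * t ^ α - d) ^ 2 + e ^ 2 := by positivity
    have h4 : 1 + ((k * t ^ α - d) / e) ^ 2 = ((k * t ^ α - d) ^ 2 + e ^ 2) / e ^ 2 := by
      field_simp
      ring
    rw [h4]
    field_simp
  have hcont : ContinuousOn (fun t : ℝ => t ^ (α - 1) / ((k * t ^ α - d) ^ 2 + e ^ 2))
      (Icc (0:ℝ) 1) := by
    apply ContinuousOn.div
    · exact continuousOn_id.rpow_const (fun x _ => Or.inr (by linarith))
    · apply ContinuousOn.add
      · apply ContinuousOn.pow
        exact (continuousOn_const.mul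
          (continuousOn_id.rpow_const (fun x _ => Or.inr (by linarith)))).sub continuousOn_const
      · exact continuousOn_const
    · intro x _
      positivity
  rw [intervalIntegral.integral_eq_sub_of_hasDerivAt hderiv
    (hcont.intervalIntegrable_of_Icc (by norm_num))]
  rw [Real.one_rpow, Real.zero_rpow hα0.ne']
  rw [show k * 0 - d = -d by ring, show -d / e = -(d / e) by ring, Real.arctan_neg]
  ring

private lemma angle_sum (θ μ : ℝ) (hθ0 : 0 < θ) (hθπ : θ < Real.pi)
    (hμ0 : 0 < μ) (hμ1 : μ ≤ 1) :
    Real.arctan ((1 - μ * Real.cos θ) / (μ * Real.sin θ)) +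
      Real.arctan (Real.cos θ / Real.sin θ) +
      (Real.arctan ((μ - Real.cos θ) / Real.sin θ) + Real.arctan (Real.cos θ / Real.sin θ)) =
      Real.pi - θ := by
  set c := Real.cos θ with hc
  set s := Real.sin θ with hs
  have hspos : 0 < s := Real.sin_pos_of_pos_of_lt_pi hθ0 hθπ
  have hcs : c ^ 2 + s ^ 2 = 1 := by
    rw [hc, hs]; exact Real.cos_sq_add_sin_sq θ
  have hc1 : c < 1 := by nlinarith
  have hc1' : -1 < c := by nlinarith
  have hμc : μ * c < 1 := by nlinarith
  have h1μc : (0:ℝ) < 1 - μ * c := by linarith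
  have h1 : Real.arctan (c / s) = Real.pi / 2 - θ := by
    rw [show c / s = Real.tan (Real.pi / 2 - θ) by
      rw [Real.tan_eq_sin_div_cos, Real.sin_pi_div_two_sub, Real.cos_pi_div_two_sub]]
    exact Real.arctan_tan (by linarith) (by linarith)
  have h2 : Real.arctan ((μ - c) / s) + Real.arctan (c / s) =
      Real.arctan (μ * s / (1 - μ * c)) := by
    have hden : 1 - (μ - c) / s * (c / s) = (1 - μ * c) / s ^ 2 := by
      field_simp
      linear_combination hcs
    have hprod : (μ - c) / s * (c / s) < 1 := by
      rw [show (μ - c) / s * (c / s) = (μ * c - c ^ 2) / s ^ 2 by ring,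
        div_lt_one (by positivity)]
      nlinarith
    rw [Real.arctan_add hprod]
    congr 1
    rw [hden, show (μ - c) / s + c / s = μ / s by ring]
    rw [div_div_div_eq]
    rw [show μ * s ^ 2 = μ * s * s by ring, show s * (1 - μ * c) = (1 - μ * c) * s by ring,
      mul_div_mul_right _ _ hspos.ne']
  have h3 : Real.arctan ((1 - μ * c) / (μ * s)) =
      Real.pi / 2 - Real.arctan (μ * s / (1 - μ * c)) := by
    have hx : 0 < μ * s / (1 - μ * c) := by positivity
    have h := Real.arctan_inv_of_pos hx
    rw [← h]
    congr 1
    rw [inv_div]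
  rw [h2, h3, h1]
  ring

/-- The error term `R(α,n,λ)` in the optimal neo-classical identity. -/
noncomputable def Rerr (α : ℝ) (n : ℕ) (lam : ℝ) : ℝ :=
  α * lam ^ α * Real.sin (α * Real.pi) / Real.pi *
    ∫ t in (0:ℝ)..1, t ^ (α - 1) * (1 - t) ^ (α * n) *
      (1 / (t ^ (2 * α) - 2 * t ^ α * lam ^ α * Real.cos (α * Real.pi) + lam ^ (2 * α)) +
       lam ^ (α * n) /
         (1 - 2 * (lam * t) ^ α * Real.cos (α * Real.pi) + (lam * t) ^ (2 * α)))

set_option maxHeartbeats 1000000 in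
/-- Bound on the error term for `1 < α < 2`. -/
theorem Rerr_bound_neg (α : ℝ) (hα1 : 1 < α) (hα2 : α < 2)
    (n : ℕ) (hn : 1 ≤ n) (lam : ℝ) (hl0 : 0 < lam) (hl1 : lam ≤ 1) :
    Rerr α n lam < 0 ∧ 1 - α < Rerr α n lam ∧ (-1 : ℝ) < 1 - α := by
  have hπ : (0:ℝ) < Real.pi := Real.pi_pos
  have hsdef : Real.sin (α * Real.pi) = -Real.sin ((α - 1) * Real.pi) := by
    rw [show (α - 1) * Real.pi = α * Real.pi - Real.pi by ring, Real.sin_sub_pi]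
    simp
  set c : ℝ := Real.cos (α * Real.pi) with hc
  set s : ℝ := Real.sin ((α - 1) * Real.pi) with hsd
  have hs : 0 < s := Real.sin_pos_of_pos_of_lt_pi (by nlinarith) (by nlinarith)
  have hcs : c ^ 2 + s ^ 2 = 1 := by
    have h := Real.cos_sq_add_sin_sq (α * Real.pi)
    rw [hc, hsd]
    nlinarith [hsdef, h]
  have hc1 : c < 1 := by nlinarith
  have hc1' : -1 < c := by nlinarith
  set μ : ℝ := lam ^ α with hμ
  have hμ0 : 0 < μ := Real.rpow_pos_of_pos hl0 α
  have hμ1 : μ ≤ 1 := Real.rpow_le_one hl0.le hl1 (by linarith)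
  have hμn1 : μ ^ n ≤ 1 := pow_le_one₀ hμ0.le hμ1
  have hμn0 : 0 < μ ^ n := pow_pos hμ0 n
  have hαn : (0:ℝ) < α * n := by
    have h : (1:ℝ) ≤ (n:ℝ) := by exact_mod_cast hn
    nlinarith
  set D1 : ℝ → ℝ := fun t => (t ^ α - μ * c) ^ 2 + (μ * s) ^ 2 with hD1
  set D2 : ℝ → ℝ := fun t => (μ * t ^ α - c) ^ 2 + s ^ 2 with hD2
  have hD1pos : ∀ t : ℝ, 0 < D1 t := fun t => by rw [hD1]; positivity
  have hD2pos : ∀ t : ℝ, 0 < D2 t := fun t => by rw [hD2]; positivity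
  set g : ℝ → ℝ := fun t => t ^ (α - 1) * (1 - t) ^ (α * n) *
      (1 / D1 t + μ ^ n / D2 t) with hg
  set G : ℝ → ℝ := fun t => t ^ (α - 1) / D1 t + t ^ (α - 1) / D2 t with hG
  -- continuity
  have hcont_pow : ContinuousOn (fun t : ℝ => t ^ (α - 1)) (Icc (0:ℝ) 1) :=
    continuousOn_id.rpow_const (fun x _ => Or.inr (by linarith))
  have hcont_powα : ContinuousOn (fun t : ℝ => t ^ α) (Icc (0:ℝ) 1) :=
    continuousOn_id.rpow_const (fun x _ => Or.inr (by linarith))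
  have hcontD1 : ContinuousOn D1 (Icc (0:ℝ) 1) :=
    ((hcont_powα.sub continuousOn_const).pow 2).add continuousOn_const
  have hcontD2 : ContinuousOn D2 (Icc (0:ℝ) 1) :=
    (((continuousOn_const.mul hcont_powα).sub continuousOn_const).pow 2).add continuousOn_const
  have hcont_1t : ContinuousOn (fun t : ℝ => (1 - t) ^ (α * n)) (Icc (0:ℝ) 1) :=
    (continuousOn_const.sub continuousOn_id).rpow_const (fun x _ => Or.inr hαn.le)
  have hcont_g : ContinuousOn g (Icc (0:ℝ) 1) :=
    (hcont_pow.mul hcont_1t).mul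
      ((continuousOn_const.div hcontD1 (fun x _ => (hD1pos x).ne')).add
        (continuousOn_const.div hcontD2 (fun x _ => (hD2pos x).ne')))
  have hcont_G1 : ContinuousOn (fun t : ℝ => t ^ (α - 1) / D1 t) (Icc (0:ℝ) 1) :=
    hcont_pow.div hcontD1 (fun x _ => (hD1pos x).ne')
  have hcont_G2 : ContinuousOn (fun t : ℝ => t ^ (α - 1) / D2 t) (Icc (0:ℝ) 1) :=
    hcont_pow.div hcontD2 (fun x _ => (hD2pos x).ne')
  have hcont_G : ContinuousOn G (Icc (0:ℝ) 1) := hcont_G1.add hcont_G2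
  -- lower bound : 0 < ∫ g
  have hJpos : (0:ℝ) < ∫ t in (0:ℝ)..1, g t := by
    have h := intervalIntegral.integral_lt_integral_of_continuousOn_of_le_of_exists_lt
      (f := fun _ : ℝ => (0:ℝ)) (g := g) (a := 0) (b := 1) one_pos
      continuousOn_const hcont_g ?_ ?_
    · simpa using h
    · intro x hx
      have hx0 : (0:ℝ) ≤ x := hx.1.le
      have hx1 : x ≤ 1 := hx.2
      have e1 := hD1pos x
      have e2 := hD2pos x
      have h1 : (0:ℝ) ≤ x ^ (α - 1) := Real.rpow_nonneg hx0 _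
      have h2 : (0:ℝ) ≤ (1 - x) ^ (α * n) := Real.rpow_nonneg (by linarith) _
      rw [hg]
      positivity
    · refine ⟨1/2, by norm_num, ?_⟩
      have e1 := hD1pos (1/2 : ℝ)
      have e2 := hD2pos (1/2 : ℝ)
      have h1 : (0:ℝ) < (1/2 : ℝ) ^ (α - 1) := Real.rpow_pos_of_pos (by norm_num) _
      have h2 : (0:ℝ) < (1 - 1/2 : ℝ) ^ (α * n) := Real.rpow_pos_of_pos (by norm_num) _
      rw [hg]
      positivity
  -- upper bound pointwise
  have hle : ∀ x ∈ Ioc (0:ℝ) 1, g x ≤ G x := by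
    intro x hx
    have hx0 : (0:ℝ) ≤ x := hx.1.le
    have hx1 : x ≤ 1 := hx.2
    have h1t : (1 - x) ^ (α * n) ≤ 1 := Real.rpow_le_one (by linarith) (by linarith) hαn.le
    have h1t0 : (0:ℝ) ≤ (1 - x) ^ (α * n) := Real.rpow_nonneg (by linarith) _
    have hp0 : (0:ℝ) ≤ x ^ (α - 1) := Real.rpow_nonneg hx0 _
    have e1 := hD1pos x
    have e2 := hD2pos x
    rw [hg, hG]
    calc x ^ (α - 1) * (1 - x) ^ (α * n) * (1 / D1 x + μ ^ n / D2 x)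
        ≤ x ^ (α - 1) * 1 * (1 / D1 x + 1 / D2 x) := by
          gcongr
      _ = x ^ (α - 1) / D1 x + x ^ (α - 1) / D2 x := by ring
  have hltpt : g (1/2 : ℝ) < G (1/2 : ℝ) := by
    have h1 : (0:ℝ) < (1/2 : ℝ) ^ (α - 1) := Real.rpow_pos_of_pos (by norm_num) _
    have hlt1 : (1 - 1/2 : ℝ) ^ (α * n) < 1 :=
      Real.rpow_lt_one (by norm_num) (by norm_num) hαn
    have h2 : (0:ℝ) ≤ (1 - 1/2 : ℝ) ^ (α * n) := Real.rpow_nonneg (by norm_num) _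
    have e1 := hD1pos (1/2 : ℝ)
    have e2 := hD2pos (1/2 : ℝ)
    rw [hg, hG]
    have hb : (0:ℝ) < 1 / D1 (1/2:ℝ) + 1 / D2 (1/2:ℝ) := by positivity
    calc (1/2 : ℝ) ^ (α - 1) * (1 - 1/2 : ℝ) ^ (α * n) *
          (1 / D1 (1/2:ℝ) + μ ^ n / D2 (1/2:ℝ))
        ≤ (1/2 : ℝ) ^ (α - 1) * (1 - 1/2 : ℝ) ^ (α * n) *
          (1 / D1 (1/2:ℝ) + 1 / D2 (1/2:ℝ)) := by
          gcongr
      _ < (1/2 : ℝ) ^ (α - 1) * 1 * (1 / D1 (1/2:ℝ) + 1 / D2 (1/2:ℝ)) := by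
          gcongr
      _ = (1/2 : ℝ) ^ (α - 1) / D1 (1/2:ℝ) + (1/2 : ℝ) ^ (α - 1) / D2 (1/2:ℝ) := by ring
  have hJlt : (∫ t in (0:ℝ)..1, g t) < ∫ t in (0:ℝ)..1, G t :=
    intervalIntegral.integral_lt_integral_of_continuousOn_of_le_of_exists_lt one_pos
      hcont_g hcont_G hle ⟨1/2, by norm_num, hltpt⟩
  -- compute ∫ G
  have hi1 := key_integral α 1 (μ * c) (μ * s) hα1 one_pos (by positivity)
  have hi2 := key_integral α μ c s hα1 hμ0 hs
  simp only [one_mul] at hi1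
  have hGsplit : (∫ t in (0:ℝ)..1, G t) =
      (∫ t in (0:ℝ)..1, t ^ (α - 1) / D1 t) + ∫ t in (0:ℝ)..1, t ^ (α - 1) / D2 t := by
    rw [hG]
    exact intervalIntegral.integral_add
      (hcont_G1.intervalIntegrable_of_Icc (by norm_num))
      (hcont_G2.intervalIntegrable_of_Icc (by norm_num))
  have hθc : Real.cos ((2 - α) * Real.pi) = c := by
    rw [hc, show (2 - α) * Real.pi = 2 * Real.pi - α * Real.pi by ring, Real.cos_sub]
    simp
  have hθs : Real.sin ((2 - α) * Real.pi) = s := by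
    rw [show (2 - α) * Real.pi = 2 * Real.pi - α * Real.pi by ring, Real.sin_sub]
    simp [hsdef, hsd]
  have hangle := angle_sum ((2 - α) * Real.pi) μ (by nlinarith) (by nlinarith) hμ0 hμ1
  rw [hθc, hθs] at hangle
  have hμcs : μ * c / (μ * s) = c / s := mul_div_mul_left c s hμ0.ne'
  have hGval : (∫ t in (0:ℝ)..1, G t) = (α - 1) * Real.pi / (α * μ * s) := by
    rw [hGsplit, hD1, hD2, hi1, hi2, hμcs]
    linear_combination (1 / (α * μ * s)) * hangle
  -- relate Rerr to ∫ g
  have hEqOn : EqOn (fun t : ℝ => t ^ (α - 1) * (1 - t) ^ (α * n) *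
      (1 / (t ^ (2 * α) - 2 * t ^ α * lam ^ α * Real.cos (α * Real.pi) + lam ^ (2 * α)) +
       lam ^ (α * n) /
         (1 - 2 * (lam * t) ^ α * Real.cos (α * Real.pi) + (lam * t) ^ (2 * α)))) g
      (uIcc (0:ℝ) 1) := by
    intro t ht
    rw [uIcc_of_le (by norm_num)] at ht
    obtain ⟨ht0, ht1⟩ := ht
    have e2α : t ^ ((2:ℝ) * α) = (t ^ α) ^ 2 := by
      rw [show (2:ℝ) * α = α * 2 by ring, Real.rpow_mul ht0, Real.rpow_two]
    have el2α : lam ^ ((2:ℝ) * α) = μ ^ 2 := by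
      rw [show (2:ℝ) * α = α * 2 by ring, Real.rpow_mul hl0.le, Real.rpow_two, hμ]
    have emul : (lam * t) ^ α = μ * t ^ α := by
      rw [Real.mul_rpow hl0.le ht0, hμ]
    have emul2 : (lam * t) ^ ((2:ℝ) * α) = (μ * t ^ α) ^ 2 := by
      rw [show (2:ℝ) * α = α * 2 by ring, Real.rpow_mul (by positivity), Real.rpow_two, emul]
    have en : lam ^ (α * (n:ℝ)) = μ ^ n := by
      rw [Real.rpow_mul hl0.le, hμ, Real.rpow_natCast]
    have d1 : (t ^ α) ^ 2 - 2 * t ^ α * μ * c + μ ^ 2 = D1 t := by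
      rw [hD1]; linear_combination (-(μ ^ 2)) * hcs
    have d2 : 1 - 2 * (μ * t ^ α) * c + (μ * t ^ α) ^ 2 = D2 t := by
      rw [hD2]; linear_combination -hcs
    simp only [hg, ← hc, ← hμ, e2α, el2α, emul, emul2, en, d1, d2]
  have hR : Rerr α n lam = -(α * μ * s / Real.pi) * ∫ t in (0:ℝ)..1, g t := by
    unfold Rerr
    rw [intervalIntegral.integral_congr hEqOn, hsdef, ← hμ]
    ring
  have hcoef : 0 < α * μ * s / Real.pi := by positivity
  refine ⟨?_, ?_, by linarith⟩
  · rw [hR]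
    nlinarith [hJpos, hcoef]
  · rw [hR]
    have hJB : (∫ t in (0:ℝ)..1, g t) < (α - 1) * Real.pi / (α * μ * s) := hGval ▸ hJlt
    have hval : α * μ * s / Real.pi * ((α - 1) * Real.pi / (α * μ * s)) = α - 1 := by
      field_simp
    nlinarith [mul_lt_mul_of_pos_left hJB hcoef]
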